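/- The operator norm of the point evaluation functional δ_x : H_w → ℝ, g ↦ g(x), equals √(1 + ∫₀^x 1/w(s) ds), i.e., ‖δ_x‖²_op = h_x(x). -/

import Mathlib

open MeasureTheory Set Filter

set_option maxHeartbeats 2000000

noncomputable section

/-- Inner product on the Filipović space `H_w`, for functions `g, h` with chosen
(weak) derivatives `g', h'`:  `⟨g,h⟩_w = g(0)h(0) + ∫₀^∞ w g' h'`. -/
def wInner (w g g' h h' : ℝ → ℝ) : ℝ :=
  g 0 * h 0 + ∫ x in Ioi (0:ℝ), w x * g' x * h' x

/-- Norm on the Filipović space `H_w`. -/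
def wNorm (w g g' : ℝ → ℝ) : ℝ := Real.sqrt (wInner w g g' g g')

/-- `w : ℝ≥0 → [1,∞)` continuous, increasing, with `w 0 = 1`. -/
structure IsWeight (w : ℝ → ℝ) : Prop where
  cont : ContinuousOn w (Ici 0)
  mono : MonotoneOn w (Ici 0)
  one_le : ∀ x ∈ Ici (0:ℝ), 1 ≤ w x
  at_zero : w 0 = 1

/-- `g ∈ H_w` with derivative `g'`: `g` is absolutely continuous on `[0,∞)` with
a.e. derivative `g'`, and `∫₀^∞ w (g')² < ∞`. -/
def MemHw (w g g' : ℝ → ℝ) : Prop :=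
  (∀ x ∈ Ici (0:ℝ), g x = g 0 + ∫ t in Ioc (0:ℝ) x, g' t) ∧
  (∀ x ∈ Ici (0:ℝ), IntegrableOn g' (Ioc 0 x)) ∧
  IntegrableOn (fun x => w x * g' x ^ 2) (Ioi 0)

/-- The reproducing kernel `h_x(y) = 1 + ∫₀^{min(x,y)} 1/w(s) ds`. -/
def hker (w : ℝ → ℝ) (x y : ℝ) : ℝ := 1 + ∫ s in Ioc (0:ℝ) (min x y), 1 / w s

/-- Derivative of `h_x`. -/
def hker' (w : ℝ → ℝ) (x : ℝ) : ℝ → ℝ := (Iic x).indicator (fun s => 1 / w s)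

lemma Ioc_subset_Ici {b : ℝ} : Ioc (0:ℝ) b ⊆ Ici 0 :=
  fun s hs => le_of_lt hs.1

lemma cs_integral {α : Type*} [MeasurableSpace α] {μ : Measure α} {F G : α → ℝ}
    (hF : Integrable (fun t => F t ^ 2) μ) (hG : Integrable (fun t => G t ^ 2) μ)
    (hFG : Integrable (fun t => F t * G t) μ) :
    (∫ t, F t * G t ∂μ) ^ 2 ≤ (∫ t, F t ^ 2 ∂μ) * (∫ t, G t ^ 2 ∂μ) := by
  set A := ∫ t, F t ^ 2 ∂μ
  set B := ∫ t, F t * G t ∂μ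
  set C := ∫ t, G t ^ 2 ∂μ
  have key : ∀ r : ℝ, 0 ≤ A * (r * r) + (2 * B) * r + C := by
    intro r
    have h1 : Integrable (fun t => r ^ 2 * F t ^ 2 + (2 * r) * (F t * G t)) μ :=
      (hF.const_mul _).add (hFG.const_mul _)
    have h2 : (fun t => (r * F t + G t) ^ 2) =
        fun t => (r ^ 2 * F t ^ 2 + (2 * r) * (F t * G t)) + G t ^ 2 := by
      funext t; ring
    have h3 : 0 ≤ ∫ t, (r * F t + G t) ^ 2 ∂μ :=
      integral_nonneg fun t => sq_nonneg _
    rw [h2, integral_add h1 hG, integral_add (hF.const_mul _) (hFG.const_mul _),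
      integral_const_mul, integral_const_mul] at h3
    nlinarith [h3]
  have := discrim_le_zero key
  rw [discrim] at this
  nlinarith [this]

/-- the operator norm of the point evaluation `δ_x` equals
`√(h_x(x)) = √(1 + ∫₀^x 1/w)`; i.e. it is the greatest value of `|g x|`
over the unit ball of `H_w` (attained). -/
theorem stmt1 (w : ℝ → ℝ) (hw : IsWeight w) (x : ℝ) (hx : 0 ≤ x) :
    IsGreatest {r : ℝ | ∃ g g' : ℝ → ℝ, MemHw w g g' ∧ wNorm w g g' ≤ 1 ∧ r = |g x|}
      (Real.sqrt (hker w x x)) := by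
  have hw1 : ∀ s ∈ Ici (0:ℝ), 1 ≤ w s := hw.one_le
  have hwpos : ∀ s ∈ Ici (0:ℝ), 0 < w s := fun s hs => lt_of_lt_of_le one_pos (hw1 s hs)
  set I := ∫ s in Ioc (0:ℝ) x, 1 / w s with hIdef
  -- 1/w is integrable on Ioc 0 x
  have hcont : ContinuousOn (fun s => 1 / w s) (Ici 0) :=
    continuousOn_const.div hw.cont fun s hs => (hwpos s hs).ne'
  have hIint : IntegrableOn (fun s => 1 / w s) (Ioc 0 x) := by
    apply Integrable.mono' (integrable_const (1:ℝ))
      ((hcont.mono Ioc_subset_Ici).aestronglyMeasurable measurableSet_Ioc)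
    filter_upwards [ae_restrict_mem measurableSet_Ioc] with s hs
    have h1 := hw1 s (Ioc_subset_Ici hs)
    have h0 := hwpos s (Ioc_subset_Ici hs)
    rw [Real.norm_eq_abs, abs_of_nonneg (by positivity)]
    rw [div_le_one h0]; exact h1
  have hInn : (0:ℝ) ≤ I :=
    setIntegral_nonneg measurableSet_Ioc fun s hs => by
      have := hwpos s (Ioc_subset_Ici hs); positivity
  have hCval : hker w x x = 1 + I := by rw [hker, min_self]
  have hC1 : (1:ℝ) ≤ 1 + I := by linarith
  set c := Real.sqrt (1 + I) with hcdef
  have hc1 : (1:ℝ) ≤ c := by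
    rw [hcdef]
    have := Real.sqrt_le_sqrt hC1
    simpa using this
  have hcpos : (0:ℝ) < c := lt_of_lt_of_le one_pos hc1
  have hcsq : c ^ 2 = 1 + I := Real.sq_sqrt (by linarith)
  constructor
  · -- membership: the extremal function
    refine ⟨fun y => hker w x y / c, fun s => hker' w x s / c, ⟨?_, ?_, ?_⟩, ?_, ?_⟩
    · -- fundamental theorem form
      intro y hy
      show hker w x y / c = hker w x 0 / c + ∫ t in Ioc (0:ℝ) y, hker' w x t / c
      have hg0 : hker w x 0 / c = 1 / c := by
        rw [hker, min_eq_right hx]; simp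
      rw [hg0]
      have : ∫ t in Ioc (0:ℝ) y, hker' w x t / c
          = (∫ t in Ioc (0:ℝ) y, hker' w x t) / c := by
        rw [integral_div]
      rw [this]
      have : ∫ t in Ioc (0:ℝ) y, hker' w x t
          = ∫ t in Ioc (0:ℝ) (min x y), 1 / w t := by
        rw [show hker' w x = (Iic x).indicator (fun s => 1 / w s) from rfl,
          setIntegral_indicator measurableSet_Iic, Ioc_inter_Iic, min_comm x y]
      rw [this, hker, add_div]
    · -- integrability of the derivative
      intro y hy
      have hasm : AEStronglyMeasurable (fun s => hker' w x s / c)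
          (volume.restrict (Ioc 0 y)) := by
        simp only [div_eq_mul_inv]
        exact (((hcont.mono Ioc_subset_Ici).aestronglyMeasurable
          measurableSet_Ioc).indicator measurableSet_Iic).mul_const c⁻¹
      apply Integrable.mono' (integrable_const (1:ℝ)) hasm
      filter_upwards [ae_restrict_mem measurableSet_Ioc] with s hs
      have h1 := hw1 s (Ioc_subset_Ici hs)
      have h0 := hwpos s (Ioc_subset_Ici hs)
      rw [Real.norm_eq_abs, abs_div, abs_of_pos hcpos]
      have hind : |hker' w x s| ≤ 1 := by
        rw [hker']
        by_cases hsx : s ∈ Iic x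
        · rw [indicator_of_mem hsx, abs_of_nonneg (by positivity), div_le_one h0]
          exact h1
        · rw [indicator_of_notMem hsx]; simp
      calc |hker' w x s| / c ≤ 1 / c := by gcongr
        _ ≤ 1 := by rw [div_le_one hcpos]; exact hc1
    · -- integrability of w * g'^2 on Ioi 0
      have heq : EqOn (fun s => w s * (hker' w x s / c) ^ 2)
          ((Ioc 0 x).indicator fun s => (1 / w s) / c ^ 2) (Ioi 0) := by
        intro s hs
        have h0 := hwpos s (mem_Ici.2 (le_of_lt (mem_Ioi.1 hs)))
        by_cases hsx : s ≤ x
        · have hmem : s ∈ Ioc 0 x := ⟨hs, hsx⟩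
          rw [indicator_of_mem hmem]
          simp only [hker', indicator_of_mem (mem_Iic.2 hsx)]
          field_simp
        · have hmem : s ∉ Ioc 0 x := fun h => hsx h.2
          rw [indicator_of_notMem hmem]
          simp only [hker', indicator_of_notMem (fun h => hsx (mem_Iic.1 h))]
          simp
      have hind : IntegrableOn ((Ioc 0 x).indicator fun s => (1 / w s) / c ^ 2) (Ioi 0) := by
        rw [IntegrableOn, integrable_indicator_iff measurableSet_Ioc, IntegrableOn,
          Measure.restrict_restrict measurableSet_Ioc,
          inter_eq_left.2 Ioc_subset_Ioi_self]
        exact hIint.div_const _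
      exact hind.congr_fun (fun s hs => (heq hs).symm) measurableSet_Ioi
    · -- norm ≤ 1
      have hg0 : hker w x 0 / c = 1 / c := by
        rw [hker, min_eq_right hx]; simp
      have heq : EqOn (fun s => w s * (hker' w x s / c) * (hker' w x s / c))
          ((Ioc 0 x).indicator fun s => (1 / w s) / c ^ 2) (Ioi 0) := by
        intro s hs
        have h0 := hwpos s (mem_Ici.2 (le_of_lt (mem_Ioi.1 hs)))
        by_cases hsx : s ≤ x
        · have hmem : s ∈ Ioc 0 x := ⟨hs, hsx⟩
          rw [indicator_of_mem hmem]
          simp only [hker', indicator_of_mem (mem_Iic.2 hsx)]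
          field_simp
        · have hmem : s ∉ Ioc 0 x := fun h => hsx h.2
          rw [indicator_of_notMem hmem]
          simp only [hker', indicator_of_notMem (fun h => hsx (mem_Iic.1 h))]
          simp
      have hint : ∫ s in Ioi (0:ℝ), w s * (hker' w x s / c) * (hker' w x s / c)
          = I / c ^ 2 := by
        rw [setIntegral_congr_fun measurableSet_Ioi heq,
          setIntegral_indicator measurableSet_Ioc,
          inter_eq_right.2 Ioc_subset_Ioi_self, integral_div]
      rw [wNorm, wInner, hg0, hint]
      have : 1 / c * (1 / c) + I / c ^ 2 = 1 := by
        rw [div_mul_div_comm, one_mul, ← sq, ← add_div, ← hcsq,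
          div_self (pow_ne_zero 2 hcpos.ne')]
      rw [this, Real.sqrt_one]
    · -- the value |g x| = √(hker w x x)
      have hval : hker w x x / c = c := by
        rw [hCval, ← hcsq, sq, mul_div_assoc, div_self hcpos.ne', mul_one]
      show Real.sqrt (hker w x x) = |hker w x x / c|
      rw [hval, hCval, ← hcdef, abs_of_pos hcpos]
  · -- upper bound
    rintro r ⟨g, g', ⟨hg1, hg2, hg3⟩, hnorm, rfl⟩
    set a := g 0
    set B := ∫ t in Ioc (0:ℝ) x, g' t with hBdef
    set A2 := ∫ s in Ioi (0:ℝ), w s * g' s * g' s with hA2def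
    -- Cauchy–Schwarz on Ioc 0 x
    set F : ℝ → ℝ := fun t => Real.sqrt (w t) * g' t with hFdef
    set G : ℝ → ℝ := fun t => (Real.sqrt (w t))⁻¹ with hGdef
    have hmem := ae_restrict_mem (μ := volume) (s := Ioc (0:ℝ) x) measurableSet_Ioc
    have haeF2 : (fun t => w t * g' t ^ 2) =ᵐ[volume.restrict (Ioc 0 x)]
        (fun t => F t ^ 2) := by
      filter_upwards [hmem] with t ht
      have h0 := hwpos t (Ioc_subset_Ici ht)
      simp only [hFdef, mul_pow, Real.sq_sqrt h0.le]
    have haeG2 : (fun t => 1 / w t) =ᵐ[volume.restrict (Ioc 0 x)]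
        (fun t => G t ^ 2) := by
      filter_upwards [hmem] with t ht
      have h0 := hwpos t (Ioc_subset_Ici ht)
      simp only [hGdef, inv_pow, Real.sq_sqrt h0.le, one_div]
    have haeFG : g' =ᵐ[volume.restrict (Ioc 0 x)] (fun t => F t * G t) := by
      filter_upwards [hmem] with t ht
      have h0 := hwpos t (Ioc_subset_Ici ht)
      have hs0 : Real.sqrt (w t) ≠ 0 := (Real.sqrt_pos.2 h0).ne'
      simp only [hFdef, hGdef]
      field_simp
    have hF2 : Integrable (fun t => F t ^ 2) (volume.restrict (Ioc 0 x)) :=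
      (hg3.mono_set Ioc_subset_Ioi_self).congr haeF2
    have hG2 : Integrable (fun t => G t ^ 2) (volume.restrict (Ioc 0 x)) :=
      hIint.congr haeG2
    have hFG : Integrable (fun t => F t * G t) (volume.restrict (Ioc 0 x)) :=
      (hg2 x hx).congr haeFG
    have hCS := cs_integral hF2 hG2 hFG
    rw [← integral_congr_ae haeFG, ← integral_congr_ae haeF2, ← integral_congr_ae haeG2]
      at hCS
    set P := ∫ t in Ioc (0:ℝ) x, w t * g' t ^ 2 with hPdef
    have hBsq : B ^ 2 ≤ P * I := hCS
    -- P ≤ A2'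
    have hA2' : A2 = ∫ s in Ioi (0:ℝ), w s * g' s ^ 2 := by
      apply setIntegral_congr_fun measurableSet_Ioi
      intro s _; ring
    have hnonnegIoi : 0 ≤ᵐ[volume.restrict (Ioi (0:ℝ))] fun s => w s * g' s ^ 2 := by
      filter_upwards [ae_restrict_mem (μ := volume) (s := Ioi (0:ℝ)) measurableSet_Ioi]
        with s hs
      have := hwpos s (mem_Ici.2 (le_of_lt (mem_Ioi.1 hs))); positivity
    have hPle : P ≤ A2 := by
      rw [hA2']
      exact setIntegral_mono_set hg3 hnonnegIoi
        (HasSubset.Subset.eventuallyLE Ioc_subset_Ioi_self)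
    have hPnn : 0 ≤ P :=
      setIntegral_nonneg measurableSet_Ioc fun s hs => by
        have := hwpos s (Ioc_subset_Ici hs); positivity
    have hA2nn : 0 ≤ A2 := le_trans hPnn hPle
    -- norm bound
    have hinner : a * a + A2 ≤ 1 := by
      have h0 : (0:ℝ) ≤ a * a + A2 := by nlinarith [mul_self_nonneg a]
      have := hnorm
      rw [wNorm, wInner] at this
      have h2 : a * a + A2 = Real.sqrt (a * a + A2) * Real.sqrt (a * a + A2) :=
        (Real.mul_self_sqrt h0).symm
      calc a * a + A2 = _ := h2
        _ ≤ 1 * 1 := mul_le_mul this this (Real.sqrt_nonneg _) zero_le_one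
        _ = 1 := one_mul 1
    have hgx : g x = a + B := hg1 x hx
    -- combine
    set p := Real.sqrt P with hpdef
    set q := Real.sqrt I with hqdef
    have hp2 : p ^ 2 = P := Real.sq_sqrt hPnn
    have hq2 : q ^ 2 = I := Real.sq_sqrt hInn
    have hpnn : 0 ≤ p := Real.sqrt_nonneg _
    have hqnn : 0 ≤ q := Real.sqrt_nonneg _
    have hBle : |B| ≤ p * q := by
      rw [hpdef, hqdef, ← Real.sqrt_mul hPnn]
      rw [show |B| = Real.sqrt (B ^ 2) by rw [Real.sqrt_sq_eq_abs]]
      exact Real.sqrt_le_sqrt hBsq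
    have hkey : (|a| + |B|) ^ 2 ≤ 1 + I := by
      have haa : |a| * |a| = a * a := abs_mul_abs_self a
      nlinarith [sq_nonneg (|a| * q - p), abs_nonneg a, abs_nonneg B,
        mul_nonneg (abs_nonneg a) (mul_nonneg hpnn hqnn), hBle, hp2, hq2, hPle, hinner]
    rw [hCval]
    calc |g x| = |a + B| := by rw [hgx]
      _ ≤ |a| + |B| := abs_add_le a B
      _ = Real.sqrt ((|a| + |B|) ^ 2) := by
          rw [Real.sqrt_sq (by positivity)]
      _ ≤ Real.sqrt (1 + I) := Real.sqrt_le_sqrt hkey
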